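/- Fix e ≥ 3. Let μ = (μ_1,...,μ_N) be a partition of d with N = k+1 parts, and let λ = (d-k, 1^k). Define T^λ_μ to be the λ-tableau obtained from T^μ by keeping the entries of the first column of T^μ in place and filling the remaining entries of T^μ in increasing order along the first row of λ. Then the residue sequence of T^λ_μ equals the residue sequence i^μ of T^μ if and only if there exist c ∈ {1,...,k+1}, positive integers a_1,...,a_c, and 0 ≤ m < e such that μ = (a_1 e, ..., a_{c-1} e, a_c e − m, 1^{k-c+1}). -/

import Mathlib

/- A partition `μ` is encoded as its list of parts `L`.  `resTrow e L r` is the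
residue of the node containing `r` in the row-reading standard tableau `T^μ`:
if `r` lies in (0-indexed) row `a` at (1-indexed) column `b`, its residue is
`b - 1 - a (mod e)`. -/

/-- Residue of the entry `r` of the row-reading tableau of the partition `L`. -/
def resTrow (e : ℕ) (L : List ℕ) (r : ℕ) : ZMod e :=
  let row := ((Finset.range L.length).filter fun a => (L.take a).sum < r).card - 1
  let col := r - (L.take row).sum
  (col : ZMod e) - 1 - (row : ZMod e)

/-- The entries of the first column of `T^μ` below the first row, down to row
`k` (0-indexed): these are the entries placed in the leg of the hook in `T^λ_μ`. -/
def legEntries (L : List ℕ) (k : ℕ) : Finset ℕ :=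
  (Finset.Icc 1 k).image fun a => (L.take a).sum + 1

/-- Residue of the entry `r` of `T^λ_μ`, the `(d-k, 1^k)`-tableau whose leg
carries the first-column entries `T^μ(2,1), ..., T^μ(k+1,1)` of `T^μ` and whose
first row carries the remaining entries in increasing order. -/
def resHook (e : ℕ) (L : List ℕ) (k : ℕ) (r : ℕ) : ZMod e :=
  if r ∈ legEntries L k then
    -(((((Finset.Icc 1 k).filter fun a => (L.take a).sum + 1 ≤ r).card : ℕ)) : ZMod e)
  else ((r - 1 - (((legEntries L k).filter fun x => x < r).card) : ℕ) : ZMod e)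

namespace ResHookAux

lemma s_step (L : List ℕ) (a : ℕ) :
    (L.take (a+1)).sum = (L.take a).sum + L.getD a 0 := by
  rcases lt_or_ge a L.length with h | h
  · rw [List.getD_eq_getElem L 0 h, List.sum_take_succ L a h]
  · rw [List.take_of_length_le h, List.take_of_length_le (le_trans h (Nat.le_succ a)),
      List.getD_eq_default _ _ h]
    omega

lemma s_mono (L : List ℕ) {a b : ℕ} (h : a ≤ b) :
    (L.take a).sum ≤ (L.take b).sum := by
  induction b with
  | zero =>
      have : a = 0 := by omega
      simp [this]
  | succ n ih =>
      rcases Nat.lt_or_ge a (n+1) with h' | h'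
      · have := ih (by omega)
        rw [s_step]; omega
      · have : a = n + 1 := by omega
        subst this; exact le_refl _

lemma getD_pos (L : List ℕ) (hpos : ∀ x ∈ L, 0 < x) {a : ℕ} (h : a < L.length) :
    0 < L.getD a 0 := by
  rw [List.getD_eq_getElem L 0 h]
  exact hpos _ (List.getElem_mem h)

lemma s_strict (L : List ℕ) (hpos : ∀ x ∈ L, 0 < x) {a b : ℕ} (h : a < b)
    (hb : b ≤ L.length) : (L.take a).sum < (L.take b).sum := by
  have h1 : (L.take (a+1)).sum = (L.take a).sum + L.getD a 0 := s_step L a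
  have h2 : 0 < L.getD a 0 := getD_pos L hpos (by omega)
  have h3 : (L.take (a+1)).sum ≤ (L.take b).sum := s_mono L (by omega)
  omega

lemma s_ge (L : List ℕ) (hpos : ∀ x ∈ L, 0 < x) {a : ℕ} (ha : a ≤ L.length) :
    a ≤ (L.take a).sum := by
  induction a with
  | zero => simp
  | succ n ih =>
      have h1 := s_step L n
      have h2 : 0 < L.getD n 0 := getD_pos L hpos (by omega)
      have := ih (by omega)
      omega

/-- The (0-indexed) row containing entry `r` in the row-reading tableau. -/
def rowOf (L : List ℕ) (k r : ℕ) : ℕ :=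
  Nat.findGreatest (fun a => (L.take a).sum < r) k

lemma rowOf_spec (L : List ℕ) (k : ℕ) (hlen : L.length = k + 1) {r : ℕ}
    (hr1 : 1 ≤ r) (hr2 : r ≤ L.sum) :
    rowOf L k r ≤ k ∧ (L.take (rowOf L k r)).sum < r ∧ r ≤ (L.take (rowOf L k r + 1)).sum := by
  have h0 : (L.take 0).sum < r := by simpa using (show 0 < r by omega)
  unfold rowOf
  refine ⟨Nat.findGreatest_le k,
    Nat.findGreatest_spec (P := fun a => (L.take a).sum < r) (Nat.zero_le k) h0, ?_⟩
  rcases Nat.lt_or_ge (Nat.findGreatest (fun a => (L.take a).sum < r) k) k with h | h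
  · have hng : ¬ ((L.take (Nat.findGreatest (fun a => (L.take a).sum < r) k + 1)).sum < r) :=
      Nat.findGreatest_is_greatest (P := fun a => (L.take a).sum < r)
        (Nat.lt_succ_self _) (by omega)
    omega
  · have hk : Nat.findGreatest (fun a => (L.take a).sum < r) k = k :=
      le_antisymm (Nat.findGreatest_le k) h
    rw [hk]
    rw [List.take_of_length_le (by omega)]
    exact hr2

lemma rowOf_unique (L : List ℕ) (k : ℕ) (hlen : L.length = k + 1)
    (hpos : ∀ x ∈ L, 0 < x) {r a : ℕ} (ha : a ≤ k)
    (h1 : (L.take a).sum < r) (h2 : r ≤ (L.take (a+1)).sum) :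
    rowOf L k r = a := by
  have hr1 : 1 ≤ r := by omega
  have hr2 : r ≤ L.sum := by
    have : (L.take (a+1)).sum ≤ (L.take (k+1)).sum := s_mono L (by omega)
    have hLk : L.take (k+1) = L := List.take_of_length_le (by omega)
    rw [hLk] at this
    omega
  obtain ⟨hA, hA1, hA2⟩ := rowOf_spec L k hlen hr1 hr2
  set A := rowOf L k r
  rcases Nat.lt_trichotomy A a with h | h | h
  · have : (L.take (A+1)).sum ≤ (L.take a).sum := s_mono L (by omega)
    omega
  · exact h
  · have : (L.take (a+1)).sum ≤ (L.take A).sum := s_mono L (by omega)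
    omega

lemma resTrow_eq (e : ℕ) (L : List ℕ) (k : ℕ) (hlen : L.length = k + 1)
    {r : ℕ} (hr1 : 1 ≤ r) (hr2 : r ≤ L.sum) :
    resTrow e L r =
      ((r - (L.take (rowOf L k r)).sum : ℕ) : ZMod e) - 1 - (rowOf L k r : ZMod e) := by
  obtain ⟨hA, hA1, hA2⟩ := rowOf_spec L k hlen hr1 hr2
  have hfilter : (Finset.range L.length).filter (fun a => (L.take a).sum < r)
      = Finset.range (rowOf L k r + 1) := by
    ext x
    simp only [Finset.mem_filter, Finset.mem_range, hlen]
    constructor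
    · rintro ⟨hx, hSx⟩
      by_contra hc
      have hgt : rowOf L k r < x := by omega
      have := Nat.findGreatest_is_greatest (P := fun a => (L.take a).sum < r)
        (by rw [rowOf] at hgt; exact hgt) (by omega)
      exact this hSx
    · intro hx
      refine ⟨by omega, ?_⟩
      have : (L.take x).sum ≤ (L.take (rowOf L k r)).sum := s_mono L (by omega)
      omega
  simp only [resTrow, hfilter, Finset.card_range, Nat.add_sub_cancel]

end ResHookAux

namespace ResHookAux

lemma rowOf_greatest (L : List ℕ) (k r : ℕ) {x : ℕ} (hx : rowOf L k r < x)
    (hxk : x ≤ k) : ¬ ((L.take x).sum < r) := by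
  unfold rowOf at hx
  exact Nat.findGreatest_is_greatest (P := fun a => (L.take a).sum < r) hx hxk

lemma mem_leg_iff (L : List ℕ) (k r : ℕ) :
    r ∈ legEntries L k ↔ ∃ a, 1 ≤ a ∧ a ≤ k ∧ (L.take a).sum + 1 = r := by
  simp [legEntries, Finset.mem_Icc, and_assoc]

lemma sum_le_total (L : List ℕ) (k : ℕ) (hlen : L.length = k + 1) {a : ℕ}
    (ha : a ≤ k) : (L.take (a+1)).sum ≤ L.sum := by
  have h1 : (L.take (a+1)).sum ≤ (L.take (k+1)).sum := s_mono L (by omega)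
  have hLk : L.take (k+1) = L := List.take_of_length_le (by omega)
  rw [hLk] at h1; exact h1

lemma match_leg (e : ℕ) (L : List ℕ) (k : ℕ) (hlen : L.length = k + 1)
    (hpos : ∀ x ∈ L, 0 < x) {a : ℕ} (ha1 : 1 ≤ a) (ha2 : a ≤ k) :
    resHook e L k ((L.take a).sum + 1) = resTrow e L ((L.take a).sum + 1) := by
  set r := (L.take a).sum + 1 with hr
  have hmem : r ∈ legEntries L k := (mem_leg_iff L k r).2 ⟨a, ha1, ha2, rfl⟩
  have hstep : (L.take (a+1)).sum = (L.take a).sum + L.getD a 0 := s_step L a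
  have hga : 0 < L.getD a 0 := getD_pos L hpos (by omega)
  have hrow : rowOf L k r = a := rowOf_unique L k hlen hpos ha2 (by omega) (by omega)
  have hsum : r ≤ L.sum := by have := sum_le_total L k hlen ha2; omega
  have hT := resTrow_eq e L k hlen (r := r) (by omega) hsum
  rw [hrow] at hT
  have hfil : (Finset.Icc 1 k).filter (fun a' => (L.take a').sum + 1 ≤ r) = Finset.Icc 1 a := by
    ext x
    simp only [Finset.mem_filter, Finset.mem_Icc]
    constructor
    · rintro ⟨⟨hx1, hxk⟩, hx⟩
      refine ⟨hx1, ?_⟩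
      by_contra hc
      have : (L.take a).sum < (L.take x).sum := s_strict L hpos (by omega) (by omega)
      omega
    · rintro ⟨hx1, hxa⟩
      have : (L.take x).sum ≤ (L.take a).sum := s_mono L hxa
      exact ⟨⟨hx1, by omega⟩, by omega⟩
  rw [resHook, if_pos hmem, hfil, Nat.card_Icc, Nat.add_sub_cancel, hT]
  have h1 : r - (L.take a).sum = 1 := by omega
  rw [h1]
  push_cast
  ring

lemma match_nonleg (e : ℕ) (L : List ℕ) (k : ℕ) (hlen : L.length = k + 1)
    (hpos : ∀ x ∈ L, 0 < x) {r : ℕ} (hr1 : 1 ≤ r) (hr2 : r ≤ L.sum)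
    (hnot : r ∉ legEntries L k) :
    (resHook e L k r = resTrow e L r) ↔ (((L.take (rowOf L k r)).sum : ZMod e) = 0) := by
  obtain ⟨hA, hA1, hA2⟩ := rowOf_spec L k hlen hr1 hr2
  have hnoteq : ∀ x, 1 ≤ x → x ≤ k → (L.take x).sum + 1 ≠ r := by
    intro x hx1 hx2 hx
    exact hnot ((mem_leg_iff L k r).2 ⟨x, hx1, hx2, hx⟩)
  have hfil : (Finset.Icc 1 k).filter (fun x => (L.take x).sum + 1 < r)
      = Finset.Icc 1 (rowOf L k r) := by
    ext x
    simp only [Finset.mem_filter, Finset.mem_Icc]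
    constructor
    · rintro ⟨⟨hx1, hxk⟩, hx⟩
      refine ⟨hx1, ?_⟩
      by_contra hc
      exact rowOf_greatest L k r (by omega) hxk (by omega)
    · rintro ⟨hx1, hxa⟩
      have h1 : (L.take x).sum ≤ (L.take (rowOf L k r)).sum := s_mono L hxa
      have h2 := hnoteq x hx1 (by omega)
      exact ⟨⟨hx1, by omega⟩, by omega⟩
  have hcount : ((legEntries L k).filter fun x => x < r).card = rowOf L k r := by
    rw [legEntries, Finset.filter_image, hfil,
      Finset.card_image_of_injOn, Nat.card_Icc, Nat.add_sub_cancel]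
    intro x hx y hy hxy
    simp only [Finset.coe_Icc, Set.mem_Icc] at hx hy
    have hxy' : (L.take x).sum = (L.take y).sum := by simpa using hxy
    by_contra hne
    rcases Nat.lt_or_ge x y with h | h
    · have := s_strict L hpos h (by omega)
      omega
    · have hyx : y < x := by omega
      have := s_strict L hpos hyx (by omega)
      omega
  have hAr : rowOf L k r + 1 ≤ r := by
    have := s_ge L hpos (a := rowOf L k r) (by omega)
    omega
  have hT := resTrow_eq e L k hlen (r := r) hr1 hr2
  rw [resHook, if_neg hnot, hcount, hT]
  have e1 : ((r - 1 - rowOf L k r : ℕ) : ZMod e)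
      = (r : ZMod e) - 1 - (rowOf L k r : ZMod e) := by
    have h1 : r - 1 - rowOf L k r = r - (1 + rowOf L k r) := by omega
    rw [h1, Nat.cast_sub (by omega)]
    push_cast; ring
  have e2 : ((r - (L.take (rowOf L k r)).sum : ℕ) : ZMod e)
      = (r : ZMod e) - ((L.take (rowOf L k r)).sum : ZMod e) :=
    Nat.cast_sub (by omega)
  rw [e1, e2]
  constructor
  · intro h; linear_combination h
  · intro h; linear_combination h

def Cnd (e : ℕ) (L : List ℕ) (k : ℕ) : Prop :=
  ∀ a, 1 ≤ a → a ≤ k → 2 ≤ L.getD a 0 → (e : ℕ) ∣ (L.take a).sum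

lemma key (e : ℕ) (L : List ℕ) (k : ℕ) (he : 3 ≤ e) (hlen : L.length = k + 1)
    (hpos : ∀ x ∈ L, 0 < x) :
    (∀ r, 1 ≤ r → r ≤ L.sum → resHook e L k r = resTrow e L r) ↔ Cnd e L k := by
  haveI : NeZero e := ⟨by omega⟩
  constructor
  · intro H a ha1 ha2 hga
    set r := (L.take a).sum + 2 with hr
    have hstep : (L.take (a+1)).sum = (L.take a).sum + L.getD a 0 := s_step L a
    have hr2 : r ≤ L.sum := by have := sum_le_total L k hlen ha2; omega
    have hnot : r ∉ legEntries L k := by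
      rw [mem_leg_iff]
      rintro ⟨x, hx1, hxk, hx⟩
      rcases Nat.lt_or_ge a x with h | h
      · have h1 : (L.take (a+1)).sum ≤ (L.take x).sum := s_mono L (by omega)
        omega
      · have h1 : (L.take x).sum ≤ (L.take a).sum := s_mono L h
        omega
    have hrow : rowOf L k r = a := rowOf_unique L k hlen hpos ha2 (by omega) (by omega)
    have := (match_nonleg e L k hlen hpos (by omega) hr2 hnot).1 (H r (by omega) hr2)
    rw [hrow] at this
    exact (ZMod.natCast_eq_zero_iff _ e).1 this
  · intro H r hr1 hr2
    by_cases hmem : r ∈ legEntries L k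
    · obtain ⟨a, ha1, ha2, ha⟩ := (mem_leg_iff L k r).1 hmem
      rw [← ha]
      exact match_leg e L k hlen hpos ha1 ha2
    · rw [match_nonleg e L k hlen hpos hr1 hr2 hmem]
      rw [ZMod.natCast_eq_zero_iff]
      obtain ⟨hA, hA1, hA2⟩ := rowOf_spec L k hlen hr1 hr2
      rcases Nat.eq_zero_or_pos (rowOf L k r) with h0 | h0
      · rw [h0]; simp
      · apply H _ h0 hA
        have hstep : (L.take (rowOf L k r + 1)).sum
            = (L.take (rowOf L k r)).sum + L.getD (rowOf L k r) 0 := s_step L _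
        have hne : (L.take (rowOf L k r)).sum + 1 ≠ r := by
          intro hx
          exact hmem ((mem_leg_iff L k r).2 ⟨rowOf L k r, h0, hA, hx⟩)
        omega

end ResHookAux

namespace ResHookAux

lemma shape_to_cnd (e k : ℕ) (L : List ℕ) (hlen : L.length = k + 1)
    (h : ∃ c, 1 ≤ c ∧ c ≤ k + 1 ∧ ∃ a : ℕ → ℕ, ∃ m, m < e ∧ (∀ x, x < c → 0 < a x) ∧
      L = List.ofFn fun x : Fin (k + 1) =>
        if (x : ℕ) + 1 < c then a (x : ℕ) * e
        else if (x : ℕ) + 1 = c then a (x : ℕ) * e - m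
        else 1) : Cnd e L k := by
  obtain ⟨c, hc1, hc2, a, m, hm, hapos, hL⟩ := h
  have hget : ∀ x : ℕ, x < k + 1 → L.getD x 0 =
      (if x + 1 < c then a x * e else if x + 1 = c then a x * e - m else 1) := by
    intro x hx
    have hx' : x < L.length := by omega
    rw [List.getD_eq_getElem _ _ hx']
    subst hL
    simp only [List.getElem_ofFn]
  have hdvd : ∀ b, b < c → (e : ℕ) ∣ (L.take b).sum := by
    intro b
    induction b with
    | zero => intro _; simp
    | succ n ih =>
        intro hb
        rw [s_step]
        refine dvd_add (ih (by omega)) ?_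
        rw [hget n (by omega), if_pos (by omega)]
        exact dvd_mul_left e (a n)
  intro x hx1 hx2 hgx
  apply hdvd
  by_contra hcx
  rw [hget x (by omega), if_neg (by omega), if_neg (by omega)] at hgx
  omega

lemma cnd_to_shape (e k : ℕ) (he : 3 ≤ e) (L : List ℕ) (hlen : L.length = k + 1)
    (hpos : ∀ x ∈ L, 0 < x) (hsort : L.Pairwise (· ≥ ·)) (H : Cnd e L k) :
    ∃ c, 1 ≤ c ∧ c ≤ k + 1 ∧ ∃ a : ℕ → ℕ, ∃ m, m < e ∧ (∀ x, x < c → 0 < a x) ∧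
      L = List.ofFn fun x : Fin (k + 1) =>
        if (x : ℕ) + 1 < c then a (x : ℕ) * e
        else if (x : ℕ) + 1 = c then a (x : ℕ) * e - m
        else 1 := by
  have hsorted : ∀ i j : ℕ, i ≤ j → j < k + 1 → L.getD j 0 ≤ L.getD i 0 := by
    intro i j hij hj
    have hi' : i < L.length := by omega
    have hj' : j < L.length := by omega
    rw [List.getD_eq_getElem _ _ hi', List.getD_eq_getElem _ _ hj']
    have := hsort.rel_get_of_le (a := ⟨i, hi'⟩) (b := ⟨j, hj'⟩) (by exact hij)
    simpa using this
  set t := Nat.findGreatest (fun j => 0 < j ∧ 2 ≤ L.getD (j - 1) 0) (k + 1) with ht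
  have htk : t ≤ k + 1 := Nat.findGreatest_le _
  have ht1 : ∀ i, i < t → 2 ≤ L.getD i 0 := by
    intro i hi
    have hspec : 0 < t ∧ 2 ≤ L.getD (t - 1) 0 :=
      Nat.findGreatest_of_ne_zero ht.symm (by omega)
    have := hsorted i (t - 1) (by omega) (by omega)
    omega
  have ht2 : ∀ i, t ≤ i → L.getD i 0 < 2 := by
    intro i hi
    rcases Nat.lt_or_ge i (k + 1) with h | h
    · by_contra hc
      have : i + 1 ≤ t := Nat.le_findGreatest (by omega) ⟨by omega, by simp at hc ⊢; omega⟩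
      omega
    · rw [List.getD_eq_default _ _ (by omega)]
      omega
  set c := max t 1 with hc
  have hc1 : 1 ≤ c := le_max_right _ _
  have hck : c ≤ k + 1 := by omega
  have hgpos : ∀ i, i < k + 1 → 0 < L.getD i 0 := fun i hi => getD_pos L hpos (by omega)
  -- value at c - 1
  set v := L.getD (c - 1) 0 with hv
  have hvpos : 0 < v := hgpos _ (by omega)
  set q := (v + (e - 1)) / e with hq
  have hqe : q * e + (v + (e - 1)) % e = v + (e - 1) := Nat.div_add_mod' _ _
  have hmod : (v + (e - 1)) % e < e := Nat.mod_lt _ (by omega)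
  have hqv1 : v ≤ q * e := by omega
  have hqv2 : q * e ≤ v + (e - 1) := by omega
  have hq1 : 1 ≤ q := Nat.div_pos (by omega) (by omega)
  have hcc : 2 ≤ c → c = t := by
    rcases Nat.eq_zero_or_pos t with h | h
    · simp [hc, h]
    · rw [hc, Nat.max_eq_left h]
      omega
  have hmul : ∀ x, x + 1 < c → (e : ℕ) ∣ L.getD x 0 := by
    intro x hx
    have hxt : x + 1 < t := by have := hcc (by omega); omega
    have h2x : 2 ≤ L.getD x 0 := ht1 x (by omega)
    have h2x1 : 2 ≤ L.getD (x + 1) 0 := ht1 (x + 1) (by omega)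
    have hdx1 : (e : ℕ) ∣ (L.take (x + 1)).sum := H (x + 1) (by omega) (by omega) h2x1
    have hstep := s_step L x
    rcases Nat.eq_zero_or_pos x with h0 | h0
    · subst h0
      rw [hstep] at hdx1
      simpa using hdx1
    · have hdx : (e : ℕ) ∣ (L.take x).sum := H x h0 (by omega) h2x
      rw [hstep] at hdx1
      exact (Nat.dvd_add_right hdx).mp hdx1
  refine ⟨c, hc1, hck, (fun x => if x + 1 < c then L.getD x 0 / e else q), q * e - v,
    by omega, ?_, ?_⟩
  · intro x hx
    show 0 < if x + 1 < c then L.getD x 0 / e else q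
    by_cases hx' : x + 1 < c
    · rw [if_pos hx']
      have hd := hmul x hx'
      have h2x : 2 ≤ L.getD x 0 := ht1 x (by omega)
      have hle : e ≤ L.getD x 0 := Nat.le_of_dvd (by omega) hd
      exact Nat.div_pos hle (by omega)
    · rw [if_neg hx']
      exact hq1
  · apply List.ext_get (by simp [hlen])
    intro n h1 h2
    have hn : n < k + 1 := by omega
    rw [List.get_eq_getElem, List.get_eq_getElem, List.getElem_ofFn]
    have hgd : L[n] = L.getD n 0 := (List.getD_eq_getElem L 0 h1).symm
    rw [hgd]
    simp only
    split_ifs with hc3 hc4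
    · exact (Nat.div_mul_cancel (hmul n hc3)).symm
    · have hn' : n = c - 1 := by omega
      rw [hn', Nat.sub_sub_self hqv1]
    · have h1' : c ≤ n := by omega
      have h2' := ht2 n (by omega)
      have h3' := hgpos n hn
      omega

end ResHookAux


/-- Lemma 5.5(i): for a partition `μ` with exactly `k+1` parts, the residue
sequence of `T^λ_μ` equals the residue sequence `i^μ` of `T^μ` iff
`μ = (a_1 e, ..., a_{c-1} e, a_c e - m, 1^{k-c+1})` for some `1 ≤ c ≤ k+1`,
positive integers `a_1, ..., a_c`, and `0 ≤ m < e`. -/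
theorem residue_match_hook_case_one_row_count (e d k : ℕ) (he : 3 ≤ e) (L : List ℕ)
    (hlen : L.length = k + 1) (hpos : ∀ x ∈ L, 0 < x)
    (hsort : L.Pairwise (· ≥ ·)) (hd : L.sum = d) :
    (∀ r, 1 ≤ r → r ≤ d → resHook e L k r = resTrow e L r) ↔
    (∃ c, 1 ≤ c ∧ c ≤ k + 1 ∧ ∃ a : ℕ → ℕ, ∃ m, m < e ∧ (∀ x, x < c → 0 < a x) ∧
      L = List.ofFn fun x : Fin (k + 1) =>
        if (x : ℕ) + 1 < c then a (x : ℕ) * e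
        else if (x : ℕ) + 1 = c then a (x : ℕ) * e - m
        else 1) := by
  subst hd
  rw [ResHookAux.key e L k he hlen hpos]
  constructor
  · exact fun H => ResHookAux.cnd_to_shape e k he L hlen hpos hsort H
  · exact fun h => ResHookAux.shape_to_cnd e k L hlen h
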